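/- arXiv:0902.3784 — 5 statements merged into one kernel-verified Lean document; each statement's English description precedes it below -/
import Mathlib

section
/- Let μ > 1, 0 < α < 1 and c > 0 be real numbers, and let r : ℕ → ℝ be nonnegative with r(0) = 0 and r(n)·n^μ·α^n → c as n → ∞. Then ρ := ∑_{n≥1} r(n)·α^n converges, and the sequence δ₂(n) := ∑_{s+t+u=n} r(s)·r(t)·C(u+2, 2) (sum over nonnegative integers s, t, u) satisfies δ₂(n)·n^μ·α^n → 2·c·ρ/(1−α)³ as n → ∞. -/
open Filter

private lemma aux_summable {μ : ℝ} (hμ : 1 < μ) {a : ℕ → ℝ} (ha : ∀ n, 0 ≤ a n)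
    (ha0 : a 0 = 0) {c : ℝ}
    (h : Tendsto (fun n : ℕ => a n * (n : ℝ) ^ μ) atTop (nhds c)) : Summable a := by
  obtain ⟨M, hM⟩ := h.bddAbove_range
  have hM' : ∀ n : ℕ, a n * (n : ℝ) ^ μ ≤ M := fun n => hM ⟨n, rfl⟩
  refine Summable.of_nonneg_of_le ha (fun n => ?_)
    (((Real.summable_nat_rpow (p := -μ)).2 (by linarith)).mul_left M)
  rcases Nat.eq_zero_or_pos n with rfl | hn
  · rw [ha0, Nat.cast_zero, Real.zero_rpow (by linarith : -μ ≠ 0), mul_zero]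
  · have hn0 : (0:ℝ) < (n:ℝ) := by exact_mod_cast hn
    have hp : (0:ℝ) < (n:ℝ) ^ μ := Real.rpow_pos_of_pos hn0 μ
    rw [Real.rpow_neg hn0.le, ← div_eq_mul_inv, le_div_iff₀ hp]
    exact hM' n

private lemma aux_shift {μ : ℝ} (hμ : 0 < μ) {b : ℕ → ℝ} {d : ℝ}
    (hb : Tendsto (fun n : ℕ => b n * (n : ℝ) ^ μ) atTop (nhds d)) (k : ℕ) :
    Tendsto (fun n : ℕ => b (n - k) * (n : ℝ) ^ μ) atTop (nhds d) := by
  have h1 : Tendsto (fun m : ℕ => ((m : ℝ) + k) / (m : ℝ)) atTop (nhds 1) := by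
    have h0 : Tendsto (fun m : ℕ => 1 + (k : ℝ) / m) atTop (nhds (1 + 0)) :=
      tendsto_const_nhds.add (tendsto_const_div_atTop_nhds_zero_nat (k : ℝ))
    rw [add_zero] at h0
    refine h0.congr' ?_
    filter_upwards [eventually_ge_atTop 1] with m hm
    have hm' : (m : ℝ) ≠ 0 := by positivity
    field_simp
  have h2 : Tendsto (fun m : ℕ => b m * ((m : ℝ) + k) ^ μ) atTop (nhds d) := by
    have h3 := hb.mul (h1.rpow_const (Or.inr hμ.le))
    rw [Real.one_rpow, mul_one] at h3
    refine h3.congr' ?_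
    filter_upwards [eventually_ge_atTop 1] with m hm
    have hm0 : (0:ℝ) < (m : ℝ) := by exact_mod_cast hm
    rw [Real.div_rpow (by positivity) hm0.le]
    field_simp [(Real.rpow_pos_of_pos hm0 μ).ne']
  have h4 := h2.comp (tendsto_sub_atTop_nat k)
  refine h4.congr' ?_
  filter_upwards [eventually_ge_atTop k] with n hn
  simp only [Function.comp_apply]
  rw [show ((n - k : ℕ) : ℝ) + (k : ℝ) = (n : ℝ) by
    rw [Nat.cast_sub hn]; ring]

private lemma aux_core {μ : ℝ} (hμ : 1 < μ) {a b : ℕ → ℝ}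
    (ha : ∀ n, 0 ≤ a n) (hb : ∀ n, 0 ≤ b n) {c d : ℝ}
    (hac : Tendsto (fun n : ℕ => a n * (n : ℝ) ^ μ) atTop (nhds c))
    (hbd : Tendsto (fun n : ℕ => b n * (n : ℝ) ^ μ) atTop (nhds d))
    (hsa : Summable a) (hsb : Summable b) :
    Tendsto (fun n : ℕ => (∑ k ∈ Finset.range (n + 1), a k * b (n - k)) * (n : ℝ) ^ μ) atTop
      (nhds (d * ∑' n, a n + c * ∑' n, b n)) := by
  have hμ0 : (0:ℝ) < μ := by linarith
  obtain ⟨Ca, hCa⟩ := hac.bddAbove_range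
  obtain ⟨Cb, hCb⟩ := hbd.bddAbove_range
  have hCa' : ∀ n : ℕ, a n * (n : ℝ) ^ μ ≤ Ca := fun n => hCa ⟨n, rfl⟩
  have hCb' : ∀ n : ℕ, b n * (n : ℝ) ^ μ ≤ Cb := fun n => hCb ⟨n, rfl⟩
  have hCa0 : 0 ≤ Ca := le_trans
    (mul_nonneg (ha 1) (Real.rpow_nonneg (Nat.cast_nonneg 1) μ)) (hCa' 1)
  have hCb0 : 0 ≤ Cb := le_trans
    (mul_nonneg (hb 1) (Real.rpow_nonneg (Nat.cast_nonneg 1) μ)) (hCb' 1)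
  set f : ℕ → ℕ → ℝ :=
    fun n k => if 2 * k ≤ n then a k * (b (n - k) * (n : ℝ) ^ μ) else 0 with hfDef
  set g : ℕ → ℕ → ℝ :=
    fun n k => if 2 * k < n then b k * (a (n - k) * (n : ℝ) ^ μ) else 0 with hgDef
  have hf_lim : ∀ k, Tendsto (fun n => f n k) atTop (nhds (a k * d)) := by
    intro k
    refine (tendsto_const_nhds.mul (aux_shift hμ0 hbd k)).congr' ?_
    filter_upwards [eventually_ge_atTop (2 * k)] with n hn
    simp only [hfDef, if_pos hn]
  have hg_lim : ∀ k, Tendsto (fun n => g n k) atTop (nhds (b k * c)) := by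
    intro k
    refine (tendsto_const_nhds.mul (aux_shift hμ0 hac k)).congr' ?_
    filter_upwards [eventually_ge_atTop (2 * k + 1)] with n hn
    simp only [hgDef, if_pos (by omega : 2 * k < n)]
  have hbound : ∀ (x : ℕ → ℝ) (Cx : ℝ), 0 ≤ Cx → (∀ m, 0 ≤ x m) →
      (∀ m, x m * (m : ℝ) ^ μ ≤ Cx) →
      ∀ n k : ℕ, 2 * k ≤ n → x (n - k) * (n : ℝ) ^ μ ≤ 2 ^ μ * Cx := by
    intro x Cx hCx hx hxC n k hkn
    have hk : k ≤ n := by omega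
    have h2 : (n : ℝ) ≤ 2 * ((n - k : ℕ) : ℝ) := by
      rw [Nat.cast_sub hk]
      have : ((2 * k : ℕ) : ℝ) ≤ (n : ℝ) := by exact_mod_cast hkn
      push_cast at this
      linarith
    calc x (n - k) * (n : ℝ) ^ μ
        ≤ x (n - k) * (2 * ((n - k : ℕ) : ℝ)) ^ μ :=
          mul_le_mul_of_nonneg_left
            (Real.rpow_le_rpow (Nat.cast_nonneg n) h2 hμ0.le) (hx _)
      _ = 2 ^ μ * (x (n - k) * ((n - k : ℕ) : ℝ) ^ μ) := by
          rw [Real.mul_rpow (by norm_num) (Nat.cast_nonneg _)]; ring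
      _ ≤ 2 ^ μ * Cx :=
          mul_le_mul_of_nonneg_left (hxC _) (Real.rpow_nonneg (by norm_num) μ)
  have hFt : Tendsto (fun n => ∑' k, f n k) atTop (nhds (∑' k, a k * d)) := by
    refine tendsto_tsum_of_dominated_convergence (bound := fun k => a k * (2 ^ μ * Cb))
      (hsa.mul_right _) hf_lim ?_
    refine Eventually.of_forall fun n => fun k => ?_
    by_cases h : 2 * k ≤ n
    · simp only [hfDef, if_pos h]
      rw [Real.norm_eq_abs, abs_of_nonneg (by
        have := Real.rpow_nonneg (Nat.cast_nonneg n) μ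
        have := ha k; have := hb (n - k); positivity)]
      exact mul_le_mul_of_nonneg_left (hbound b Cb hCb0 hb hCb' n k h) (ha k)
    · simp only [hfDef, if_neg h, norm_zero]
      have := Real.rpow_nonneg (by norm_num : (0:ℝ) ≤ 2) μ
      have := ha k
      positivity
  have hGt : Tendsto (fun n => ∑' k, g n k) atTop (nhds (∑' k, b k * c)) := by
    refine tendsto_tsum_of_dominated_convergence (bound := fun k => b k * (2 ^ μ * Ca))
      (hsb.mul_right _) hg_lim ?_
    refine Eventually.of_forall fun n => fun k => ?_
    by_cases h : 2 * k < n
    · simp only [hgDef, if_pos h]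
      rw [Real.norm_eq_abs, abs_of_nonneg (by
        have := Real.rpow_nonneg (Nat.cast_nonneg n) μ
        have := hb k; have := ha (n - k); positivity)]
      exact mul_le_mul_of_nonneg_left (hbound a Ca hCa0 ha hCa' n k (by omega)) (hb k)
    · simp only [hgDef, if_neg h, norm_zero]
      have := Real.rpow_nonneg (by norm_num : (0:ℝ) ≤ 2) μ
      have := hb k
      positivity
  have hkey : ∀ n, (∑ k ∈ Finset.range (n + 1), a k * b (n - k)) * (n : ℝ) ^ μ
      = (∑' k, f n k) + (∑' k, g n k) := by
    intro n
    rw [tsum_eq_sum (s := Finset.range (n + 1)) (fun k hk => by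
      simp only [Finset.mem_range, not_lt] at hk
      simp only [hfDef, if_neg (by omega : ¬ 2 * k ≤ n)]),
      tsum_eq_sum (s := Finset.range (n + 1)) (fun k hk => by
      simp only [Finset.mem_range, not_lt] at hk
      simp only [hgDef, if_neg (by omega : ¬ 2 * k < n)])]
    rw [← Finset.sum_range_reflect (fun k => g n k) (n + 1)]
    simp only [Nat.add_sub_cancel]
    rw [← Finset.sum_add_distrib, Finset.sum_mul]
    refine Finset.sum_congr rfl fun k hk => ?_
    simp only [Finset.mem_range] at hk
    have hkn : k ≤ n := by omega
    rcases le_or_gt (2 * k) n with h | h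
    · simp only [hfDef, hgDef, if_pos h, if_neg (by omega : ¬ 2 * (n - k) < n)]
      ring
    · simp only [hfDef, hgDef, if_neg (by omega : ¬ 2 * k ≤ n),
        if_pos (by omega : 2 * (n - k) < n), (by omega : n - (n - k) = k)]
      ring
  have hcomb := hFt.add hGt
  rw [tsum_mul_right, tsum_mul_right] at hcomb
  have : (∑' n, a n) * d + (∑' n, b n) * c = d * ∑' n, a n + c * ∑' n, b n := by ring
  rw [this] at hcomb
  exact hcomb.congr fun n => (hkey n).symm

/- Asymptotics of the number of structures with exactly two irreducible
substructures: `ρ = ∑_{n≥1} r(n)·α^n` converges and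
`δ₂(n) = ∑_{s+t+u=n} r(s)r(t)·C(u+2,2)` satisfies
`δ₂(n)·n^μ·α^n → 2cρ/(1-α)³`. -/
theorem stmt_13 (μ α c : ℝ) (hμ : 1 < μ) (hα0 : 0 < α) (hα1 : α < 1) (hc : 0 < c)
    (r : ℕ → ℝ) (hr0 : r 0 = 0) (hrpos : ∀ n, 0 ≤ r n)
    (hasym : Tendsto (fun n : ℕ => r n * (n : ℝ) ^ μ * α ^ n) atTop (nhds c))
    (δ₂ : ℕ → ℝ)
    (hδ₂ : ∀ n, δ₂ n = ∑ s ∈ Finset.range (n + 1), ∑ t ∈ Finset.range (n - s + 1),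
      r s * r t * (Nat.choose (n - s - t + 2) 2 : ℝ)) :
    Summable (fun n : ℕ => r n * α ^ n) ∧
      Tendsto (fun n : ℕ => δ₂ n * (n : ℝ) ^ μ * α ^ n) atTop
        (nhds (2 * c * (∑' n : ℕ, r n * α ^ n) / (1 - α) ^ 3)) := by
  have hμ0 : (0:ℝ) < μ := by linarith
  set a : ℕ → ℝ := fun n => r n * α ^ n with haDef
  set b : ℕ → ℝ := fun n => ((n + 2).choose 2 : ℝ) * α ^ n with hbDef
  have ha : ∀ n, 0 ≤ a n := fun n => mul_nonneg (hrpos n) (pow_nonneg hα0.le n)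
  have hb : ∀ n, 0 ≤ b n := fun n => mul_nonneg (Nat.cast_nonneg _) (pow_nonneg hα0.le n)
  have hnorm : ‖α‖ < 1 := by rw [Real.norm_eq_abs, abs_of_pos hα0]; exact hα1
  have hac : Tendsto (fun n : ℕ => a n * (n : ℝ) ^ μ) atTop (nhds c) :=
    hasym.congr fun n => by simp only [haDef]; ring
  have hsa : Summable a := aux_summable hμ ha (by simp [haDef, hr0]) hac
  have hsb : Summable b := summable_choose_mul_geometric_of_norm_lt_one 2 hnorm
  have hBsum : ∑' n, b n = 1 / (1 - α) ^ (3 : ℕ) := by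
    simpa using tsum_choose_mul_geometric_of_norm_lt_one 2 hnorm
  have hbd : Tendsto (fun n : ℕ => b n * (n : ℝ) ^ μ) atTop (nhds 0) := by
    set K := ⌈μ⌉₊ with hK
    have hμK : μ ≤ (K : ℝ) := Nat.le_ceil μ
    have hmaj : Tendsto (fun n : ℕ => 9 * ((n : ℝ) ^ (K + 2) * α ^ n)) atTop (nhds (9 * 0)) :=
      (tendsto_pow_const_mul_const_pow_of_lt_one (K + 2) hα0.le hα1).const_mul 9
    rw [mul_zero] at hmaj
    refine squeeze_zero' (Eventually.of_forall fun n => by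
      have := Real.rpow_nonneg (Nat.cast_nonneg n) μ
      have := hb n; positivity) ?_ hmaj
    filter_upwards [eventually_ge_atTop 1] with n hn
    have hn0 : (0:ℝ) < (n : ℝ) := by exact_mod_cast hn
    have h1 : (n : ℝ) ^ μ ≤ (n : ℝ) ^ (K : ℕ) := by
      rw [← Real.rpow_natCast (n : ℝ) K]
      exact Real.rpow_le_rpow_of_exponent_le (by exact_mod_cast hn) hμK
    have h2 : ((n + 2).choose 2 : ℝ) ≤ 9 * (n : ℝ) ^ 2 := by
      have hnat : (n + 2).choose 2 ≤ 9 * n ^ 2 := by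
        calc (n + 2).choose 2 ≤ (n + 2) ^ 2 := Nat.choose_le_pow (n + 2) 2
          _ ≤ (3 * n) ^ 2 := Nat.pow_le_pow_left (by omega) 2
          _ = 9 * n ^ 2 := by ring
      exact_mod_cast hnat
    calc b n * (n : ℝ) ^ μ
        = ((n + 2).choose 2 : ℝ) * (n : ℝ) ^ μ * α ^ n := by
          simp only [hbDef]; ring
      _ ≤ (9 * (n : ℝ) ^ 2) * (n : ℝ) ^ (K : ℕ) * α ^ n := by
          refine mul_le_mul_of_nonneg_right ?_ (pow_nonneg hα0.le n)
          exact mul_le_mul h2 h1 (Real.rpow_nonneg (Nat.cast_nonneg n) μ) (by positivity)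
      _ = 9 * ((n : ℝ) ^ (K + 2) * α ^ n) := by ring
  have hconv := aux_core hμ ha hb hac hbd hsa hsb
  rw [zero_mul, zero_add] at hconv
  have hsa' : Summable fun n => ‖a n‖ := by
    refine hsa.congr fun n => ?_
    rw [Real.norm_eq_abs, abs_of_nonneg (ha n)]
  have hsb' : Summable fun n => ‖b n‖ := by
    refine hsb.congr fun n => ?_
    rw [Real.norm_eq_abs, abs_of_nonneg (hb n)]
  have hsab : Summable (fun n => ∑ k ∈ Finset.range (n + 1), a k * b (n - k)) :=
    (summable_norm_sum_mul_range_of_summable_norm hsa' hsb').of_norm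
  have htsum_ab : ∑' n, ∑ k ∈ Finset.range (n + 1), a k * b (n - k)
      = (∑' n, a n) * (∑' n, b n) :=
    (tsum_mul_tsum_eq_tsum_sum_range_of_summable_norm hsa' hsb').symm
  have hab_nonneg : ∀ n, 0 ≤ ∑ k ∈ Finset.range (n + 1), a k * b (n - k) :=
    fun n => Finset.sum_nonneg fun k _ => mul_nonneg (ha k) (hb _)
  have hfinal := aux_core hμ ha hab_nonneg hac hconv hsa hsab
  refine ⟨hsa, ?_⟩
  have hval : (c * ∑' n, b n) * (∑' n, a n)
        + c * ∑' n, ∑ k ∈ Finset.range (n + 1), a k * b (n - k)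
      = 2 * c * (∑' n, a n) / (1 - α) ^ 3 := by
    rw [htsum_ab, hBsum]
    ring
  rw [hval] at hfinal
  refine hfinal.congr fun n => ?_
  have hδ : δ₂ n * α ^ n
      = ∑ s ∈ Finset.range (n + 1), a s * ∑ k ∈ Finset.range (n - s + 1), a k * b (n - s - k) := by
    rw [hδ₂ n, Finset.sum_mul]
    refine Finset.sum_congr rfl fun s hs => ?_
    simp only [Finset.mem_range] at hs
    rw [Finset.sum_mul, Finset.mul_sum]
    refine Finset.sum_congr rfl fun t ht => ?_
    simp only [Finset.mem_range] at ht
    have hpow : α ^ s * α ^ t * α ^ (n - s - t) = α ^ n := by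
      rw [← pow_add, ← pow_add]
      congr 1
      omega
    simp only [haDef, hbDef]
    rw [← hpow]
    ring
  rw [← hδ]
  ring
end

section
/- Let μ > 1, 0 < α < 1 and c > 0 be real numbers, and let r : ℕ → ℝ satisfy r(0) = 0, r(n) > 0 and r(n+1) > r(n) for all n ≥ 1, and r(n)·n^μ·α^n → c as n → ∞. Let x : ℕ → ℕ satisfy x_n → ∞ and 2·x_n ≤ n for all n. Then there exist real constants 0 < κ₁ ≤ κ₂ and N ∈ ℕ such that for all n ≥ N: κ₁·C(n − 2x_n + 2, 2)·r(x_n) ≤ ∑_{i=1}^{x_n} C(n − x_n − i + 2, 2)·r(i) ≤ κ₂·C(n − 2x_n + 2, 2)·r(x_n). -/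
open Filter

private lemma choose_aux14 (m j : ℕ) (hm : 2 ≤ m) :
    ((m + j).choose 2 : ℝ) ≤ (1 + (j:ℝ))^2 * (m.choose 2 : ℝ) := by
  rw [Nat.cast_choose_two, Nat.cast_choose_two]
  push_cast
  have h2 : (2:ℝ) ≤ (m:ℝ) := by exact_mod_cast hm
  have hj : (0:ℝ) ≤ (j:ℝ) := Nat.cast_nonneg j
  nlinarith [mul_nonneg hj (by linarith : (0:ℝ) ≤ (m:ℝ) - 2),
    mul_nonneg (mul_nonneg hj hj) (by linarith : (0:ℝ) ≤ (m:ℝ) - 1),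
    mul_nonneg hj (by linarith : (0:ℝ) ≤ (m:ℝ) - 1),
    mul_nonneg (mul_nonneg hj hj) (by linarith : (0:ℝ) ≤ (m:ℝ) - 2)]

/- The Claim of Section 6: the convolution sum
`∑_{i=1}^{x_n} C(n-x_n-i+2,2)·r(i)` is of the same order as its largest term
`C(n-2x_n+2,2)·r(x_n)`, i.e. bounded between `κ₁` and `κ₂` times it, for
`n` large. -/
theorem stmt_14 (μ α c : ℝ) (hμ : 1 < μ) (hα0 : 0 < α) (hα1 : α < 1) (hc : 0 < c)
    (r : ℕ → ℝ) (hr0 : r 0 = 0) (hrpos : ∀ n, 1 ≤ n → 0 < r n)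
    (hrmono : ∀ n, 1 ≤ n → r n < r (n + 1))
    (hasym : Tendsto (fun n : ℕ => r n * (n : ℝ) ^ μ * α ^ n) atTop (nhds c))
    (x : ℕ → ℕ) (hx : Tendsto x atTop atTop) (hx2 : ∀ n, 2 * x n ≤ n) :
    ∃ κ₁ κ₂ : ℝ, 0 < κ₁ ∧ κ₁ ≤ κ₂ ∧ ∃ N : ℕ, ∀ n ≥ N,
      κ₁ * (Nat.choose (n - 2 * x n + 2) 2 : ℝ) * r (x n) ≤
          (∑ i ∈ Finset.Icc 1 (x n), (Nat.choose (n - x n - i + 2) 2 : ℝ) * r i) ∧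
        (∑ i ∈ Finset.Icc 1 (x n), (Nat.choose (n - x n - i + 2) 2 : ℝ) * r i) ≤
          κ₂ * (Nat.choose (n - 2 * x n + 2) 2 : ℝ) * r (x n) := by
  set β : ℝ := (1 + α) / 2 with hβdef
  have hβ0 : 0 < β := by rw [hβdef]; linarith
  have hαβ : α < β := by rw [hβdef]; linarith
  have hβ1 : β < 1 := by rw [hβdef]; linarith
  -- Step 1: eventual ratio bound r m ≤ β * r (m+1)
  obtain ⟨M, hM⟩ : ∃ M0 : ℕ, ∀ m ≥ M0, r m ≤ β * r (m + 1) := by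
    have hf1 : Tendsto (fun m : ℕ => r (m+1) * ((m:ℝ)+1) ^ μ * α ^ (m+1)) atTop (nhds c) := by
      have h := hasym.comp (tendsto_add_atTop_nat 1)
      exact h.congr (fun m => by simp [Function.comp])
    have hq : Tendsto (fun m : ℕ => ((m:ℝ)/((m:ℝ)+1)) ^ μ) atTop (nhds 1) := by
      have h1 : Tendsto (fun m : ℕ => (m:ℝ)/((m:ℝ)+1)) atTop (nhds 1) :=
        tendsto_natCast_div_add_atTop (1:ℝ)
      have h2 : ContinuousAt (fun y : ℝ => y ^ μ) 1 :=
        Real.continuousAt_rpow_const 1 μ (Or.inl one_ne_zero)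
      have := h2.tendsto.comp h1
      simpa [Real.one_rpow, Function.comp_def] using this
    have hg : Tendsto (fun m : ℕ =>
        (β/α) * ((m:ℝ)/((m:ℝ)+1)) ^ μ * (r (m+1) * ((m:ℝ)+1) ^ μ * α ^ (m+1))
          - r m * (m:ℝ) ^ μ * α ^ m) atTop (nhds ((β/α) * 1 * c - c)) :=
      ((tendsto_const_nhds.mul hq).mul hf1).sub hasym
    have hL : 0 < (β/α) * 1 * c - c := by
      have h1 : 1 < β / α := (one_lt_div hα0).2 hαβ
      nlinarith
    have hev := hg.eventually (eventually_gt_nhds hL)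
    rw [eventually_atTop] at hev
    obtain ⟨M0, hM⟩ := hev
    refine ⟨max M0 1, fun m hm => ?_⟩
    have hm0 : M0 ≤ m := le_trans (le_max_left _ _) hm
    have hm1 : 1 ≤ m := le_trans (le_max_right _ _) hm
    have h := hM m hm0
    have hmpos : (0:ℝ) < (m:ℝ) := by exact_mod_cast hm1
    have hmp : (0:ℝ) < (m:ℝ) ^ μ := Real.rpow_pos_of_pos hmpos μ
    have hm1p : (0:ℝ) < ((m:ℝ)+1) ^ μ := Real.rpow_pos_of_pos (by linarith) μ
    have hαp : (0:ℝ) < α ^ m := pow_pos hα0 m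
    have hdiv : ((m:ℝ)/((m:ℝ)+1)) ^ μ = (m:ℝ)^μ / ((m:ℝ)+1)^μ :=
      Real.div_rpow hmpos.le (by linarith : (0:ℝ) ≤ (m:ℝ)+1) μ
    rw [hdiv] at h
    have hsimp : (β/α) * ((m:ℝ)^μ/(((m:ℝ)+1))^μ) * (r (m+1) * ((m:ℝ)+1)^μ * α^(m+1))
        = (β * r (m+1)) * ((m:ℝ)^μ * α^m) := by
      rw [pow_succ]
      field_simp
    have h3 : r m * (m:ℝ)^μ * α^m < (β * r (m+1)) * ((m:ℝ)^μ * α^m) := by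
      have := sub_pos.mp h
      rwa [hsimp] at this
    have h4 : r m * ((m:ℝ)^μ * α^m) < (β * r (m+1)) * ((m:ℝ)^μ * α^m) := by
      rw [← mul_assoc]; exact h3
    exact (lt_of_mul_lt_mul_right h4 (by positivity)).le
  -- replace M with max M 1 so that 1 ≤ M
  obtain ⟨M, hM, hM1⟩ : ∃ M0 : ℕ, (∀ m ≥ M0, r m ≤ β * r (m + 1)) ∧ 1 ≤ M0 :=
    ⟨max M 1, fun m hm => hM m (le_trans (le_max_left _ _) hm), le_max_right _ _⟩
  -- monotonicity of r on [1, ∞)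
  have rmono : ∀ a b : ℕ, 1 ≤ a → a ≤ b → r a ≤ r b := by
    intro a b ha hab
    induction b, hab using Nat.le_induction with
    | base => exact le_rfl
    | succ b hab ih => exact ih.trans (hrmono b (ha.trans hab)).le
  -- geometric decay
  have hdecay : ∀ d i, M ≤ i → r i ≤ β^d * r (i + d) := by
    intro d
    induction d with
    | zero => intro i _; simp
    | succ d ih =>
      intro i hi
      have h1 := ih i hi
      have h2 : r (i + d) ≤ β * r (i + d + 1) := hM (i + d) (le_trans hi (Nat.le_add_right _ _))
      calc r i ≤ β^d * r (i+d) := h1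
        _ ≤ β^d * (β * r (i+d+1)) := mul_le_mul_of_nonneg_left h2 (pow_nonneg hβ0.le d)
        _ = β^(d+1) * r (i + (d+1)) := by rw [pow_succ]; ring_nf
  have key2 : ∀ i y, M ≤ i → i ≤ y → r i ≤ β^(y - i) * r y := by
    intro i y hMi hiy
    have := hdecay (y - i) i hMi
    rwa [Nat.add_sub_cancel' hiy] at this
  -- summability and S
  have hsummable : Summable (fun j : ℕ => (1 + (j:ℝ))^2 * β^j) := by
    have hβn : ‖β‖ < 1 := by rw [Real.norm_eq_abs, abs_of_pos hβ0]; exact hβ1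
    have h2 := summable_pow_mul_geometric_of_norm_lt_one (R := ℝ) 2 hβn
    have h1 := summable_pow_mul_geometric_of_norm_lt_one (R := ℝ) 1 hβn
    have h0 := summable_pow_mul_geometric_of_norm_lt_one (R := ℝ) 0 hβn
    have := (h2.add ((h1.mul_left 2).add h0))
    exact this.congr (fun j => by push_cast; ring)
  set S : ℝ := ∑' j : ℕ, (1 + (j:ℝ))^2 * β^j with hSdef
  have hS0 : 0 ≤ S := tsum_nonneg (fun j => by positivity)
  have hSle : ∀ k : ℕ, ∑ j ∈ Finset.range k, (1 + (j:ℝ))^2 * β^j ≤ S :=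
    fun k => Summable.sum_le_tsum _ (fun j _ => by positivity) hsummable
  -- eventual smallness of M (1+y)^2 β^y
  have hzero : Tendsto (fun y : ℕ => (M:ℝ) * ((1+(y:ℝ))^2 * β^y)) atTop (nhds 0) := by
    have := hsummable.tendsto_atTop_zero.const_mul (M:ℝ)
    simpa using this
  have hev2 := hzero.eventually (eventually_lt_nhds (pow_pos hβ0 M))
  rw [eventually_atTop] at hev2
  obtain ⟨Y0, hY0⟩ := hev2
  obtain ⟨N, hN⟩ := eventually_atTop.mp (hx.eventually_ge_atTop (max Y0 (M+1)))
  refine ⟨1, S + 1, one_pos, by linarith, N, fun n hn => ?_⟩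
  have hxY := hN n hn
  have h2x : 2 * x n ≤ n := hx2 n
  have hxM : M + 1 ≤ x n := le_trans (le_max_right _ _) hxY
  have hxY0 : Y0 ≤ x n := le_trans (le_max_left _ _) hxY
  have hx1 : 1 ≤ x n := by omega
  have hrx : 0 < r (x n) := hrpos _ hx1
  have hm2 : 2 ≤ n - 2 * x n + 2 := by omega
  have hCb0 : (0:ℝ) ≤ (Nat.choose (n - 2 * x n + 2) 2 : ℝ) := Nat.cast_nonneg _
  have hCbrx : (0:ℝ) ≤ (Nat.choose (n - 2 * x n + 2) 2 : ℝ) * r (x n) :=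
    mul_nonneg hCb0 hrx.le
  constructor
  · -- lower bound
    have hmem : x n ∈ Finset.Icc 1 (x n) := Finset.mem_Icc.mpr ⟨hx1, le_rfl⟩
    have hnn : ∀ i ∈ Finset.Icc 1 (x n),
        (0:ℝ) ≤ (Nat.choose (n - x n - i + 2) 2 : ℝ) * r i := fun i hi =>
      mul_nonneg (Nat.cast_nonneg _) (hrpos i (Finset.mem_Icc.mp hi).1).le
    have hsingle := Finset.single_le_sum hnn hmem
    have heq : n - x n - x n + 2 = n - 2 * x n + 2 := by omega
    rw [heq] at hsingle
    rw [one_mul]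
    exact hsingle
  · -- upper bound
    have hIcc : Finset.Icc 1 (x n) = Finset.Ioc 0 (x n) := by
      ext i; simp [Finset.mem_Icc, Finset.mem_Ioc]; omega
    have hsplit := Finset.sum_Ioc_consecutive
      (fun i => (Nat.choose (n - x n - i + 2) 2 : ℝ) * r i)
      (Nat.zero_le (M-1)) (show M - 1 ≤ x n by omega)
    -- bound on part A (i ≤ M-1)
    have hA1 : (M:ℝ) * ((1+(x n:ℝ))^2 * β^(x n - M)) ≤ 1 := by
      have hβM : (0:ℝ) < β^M := pow_pos hβ0 M
      have hpow : β^(x n - M) * β^M = β^(x n) := pow_sub_mul_pow β (by omega)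
      refine le_of_mul_le_mul_right ?_ hβM
      rw [one_mul, mul_assoc, mul_assoc, hpow]
      exact (hY0 (x n) hxY0).le
    have htermA : ∀ i ∈ Finset.Ioc 0 (M-1),
        (Nat.choose (n - x n - i + 2) 2 : ℝ) * r i ≤
          ((1+(x n:ℝ))^2 * β^(x n - M)) * ((Nat.choose (n - 2 * x n + 2) 2 : ℝ) * r (x n)) := by
      intro i hi
      obtain ⟨hi1, hi2⟩ := Finset.mem_Ioc.mp hi
      have hi0 : 1 ≤ i := hi1
      have hiM : i ≤ M := by omega
      have hix : i ≤ x n := by omega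
      have hch : (Nat.choose (n - x n - i + 2) 2 : ℝ) ≤
          (1 + ((x n - i : ℕ):ℝ))^2 * (Nat.choose (n - 2 * x n + 2) 2 : ℝ) := by
        rw [show n - x n - i + 2 = (n - 2 * x n + 2) + (x n - i) by omega]
        exact choose_aux14 _ _ hm2
      have hch2 : (1 + ((x n - i : ℕ):ℝ))^2 ≤ (1 + (x n:ℝ))^2 := by
        have : ((x n - i : ℕ):ℝ) ≤ (x n:ℝ) := by exact_mod_cast Nat.sub_le _ _
        have h0 : (0:ℝ) ≤ 1 + ((x n - i : ℕ):ℝ) := by positivity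
        exact pow_le_pow_left₀ h0 (by linarith) 2
      have hri : r i ≤ β^(x n - M) * r (x n) := by
        calc r i ≤ r M := rmono i M hi0 hiM
          _ ≤ β^(x n - M) * r (x n) := key2 M (x n) le_rfl (by omega)
      calc (Nat.choose (n - x n - i + 2) 2 : ℝ) * r i
          ≤ ((1 + (x n:ℝ))^2 * (Nat.choose (n - 2 * x n + 2) 2 : ℝ)) * (β^(x n - M) * r (x n)) := by
            refine mul_le_mul (hch.trans ?_) hri (hrpos i hi0).le (by positivity)
            exact mul_le_mul_of_nonneg_right hch2 hCb0
        _ = ((1+(x n:ℝ))^2 * β^(x n - M)) * ((Nat.choose (n - 2 * x n + 2) 2 : ℝ) * r (x n)) := by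
            ring
    have hsumA : ∑ i ∈ Finset.Ioc 0 (M-1),
        (Nat.choose (n - x n - i + 2) 2 : ℝ) * r i ≤
          (Nat.choose (n - 2 * x n + 2) 2 : ℝ) * r (x n) := by
      have hK0 : (0:ℝ) ≤ ((1+(x n:ℝ))^2 * β^(x n - M)) * ((Nat.choose (n - 2 * x n + 2) 2 : ℝ) * r (x n)) := by
        positivity
      have h1 := Finset.sum_le_card_nsmul _ _ _ htermA
      rw [Nat.card_Ioc, nsmul_eq_mul] at h1
      have h2 : ((M - 1 - 0 : ℕ):ℝ) ≤ (M:ℝ) := by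
        have : (M - 1 - 0 : ℕ) ≤ M := by omega
        exact_mod_cast this
      calc ∑ i ∈ Finset.Ioc 0 (M-1), (Nat.choose (n - x n - i + 2) 2 : ℝ) * r i
          ≤ ((M - 1 - 0 : ℕ):ℝ) * (((1+(x n:ℝ))^2 * β^(x n - M)) * ((Nat.choose (n - 2 * x n + 2) 2 : ℝ) * r (x n))) := h1
        _ ≤ (M:ℝ) * (((1+(x n:ℝ))^2 * β^(x n - M)) * ((Nat.choose (n - 2 * x n + 2) 2 : ℝ) * r (x n))) :=
            mul_le_mul_of_nonneg_right h2 hK0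
        _ = ((M:ℝ) * ((1+(x n:ℝ))^2 * β^(x n - M))) * ((Nat.choose (n - 2 * x n + 2) 2 : ℝ) * r (x n)) := by ring
        _ ≤ 1 * ((Nat.choose (n - 2 * x n + 2) 2 : ℝ) * r (x n)) :=
            mul_le_mul_of_nonneg_right hA1 hCbrx
        _ = (Nat.choose (n - 2 * x n + 2) 2 : ℝ) * r (x n) := one_mul _
    -- part B
    have htermB : ∀ i ∈ Finset.Ioc (M-1) (x n),
        (Nat.choose (n - x n - i + 2) 2 : ℝ) * r i ≤
          ((1 + ((x n - i : ℕ):ℝ))^2 * β^(x n - i)) * ((Nat.choose (n - 2 * x n + 2) 2 : ℝ) * r (x n)) := by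
      intro i hi
      obtain ⟨hi1, hi2⟩ := Finset.mem_Ioc.mp hi
      have hiM : M ≤ i := by omega
      have hi0 : 1 ≤ i := by omega
      have hri : r i ≤ β^(x n - i) * r (x n) := key2 i (x n) hiM hi2
      have hch : (Nat.choose (n - x n - i + 2) 2 : ℝ) ≤
          (1 + ((x n - i : ℕ):ℝ))^2 * (Nat.choose (n - 2 * x n + 2) 2 : ℝ) := by
        rw [show n - x n - i + 2 = (n - 2 * x n + 2) + (x n - i) by omega]
        exact choose_aux14 _ _ hm2
      calc (Nat.choose (n - x n - i + 2) 2 : ℝ) * r i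
          ≤ ((1 + ((x n - i : ℕ):ℝ))^2 * (Nat.choose (n - 2 * x n + 2) 2 : ℝ)) * (β^(x n - i) * r (x n)) :=
            mul_le_mul hch hri (hrpos i hi0).le (by positivity)
        _ = ((1 + ((x n - i : ℕ):ℝ))^2 * β^(x n - i)) * ((Nat.choose (n - 2 * x n + 2) 2 : ℝ) * r (x n)) := by
            ring
    have hsumB : ∑ i ∈ Finset.Ioc (M-1) (x n),
        (Nat.choose (n - x n - i + 2) 2 : ℝ) * r i ≤
          S * ((Nat.choose (n - 2 * x n + 2) 2 : ℝ) * r (x n)) := by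
      have hsub : Finset.Ioc (M-1) (x n) ⊆ Finset.range (x n + 1) := by
        intro i hi
        rw [Finset.mem_range]
        have := (Finset.mem_Ioc.mp hi).2
        omega
      have hrefl := Finset.sum_range_reflect (fun j => (1 + (j:ℝ))^2 * β^j) (x n + 1)
      simp only [Nat.add_sub_cancel] at hrefl
      calc ∑ i ∈ Finset.Ioc (M-1) (x n), (Nat.choose (n - x n - i + 2) 2 : ℝ) * r i
          ≤ ∑ i ∈ Finset.Ioc (M-1) (x n),
              ((1 + ((x n - i : ℕ):ℝ))^2 * β^(x n - i)) * ((Nat.choose (n - 2 * x n + 2) 2 : ℝ) * r (x n)) :=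
            Finset.sum_le_sum htermB
        _ ≤ ∑ i ∈ Finset.range (x n + 1),
              ((1 + ((x n - i : ℕ):ℝ))^2 * β^(x n - i)) * ((Nat.choose (n - 2 * x n + 2) 2 : ℝ) * r (x n)) := by
            refine Finset.sum_le_sum_of_subset_of_nonneg hsub (fun i _ _ => ?_)
            have := hrx.le
            positivity
        _ = (∑ i ∈ Finset.range (x n + 1), (1 + ((x n - i : ℕ):ℝ))^2 * β^(x n - i))
              * ((Nat.choose (n - 2 * x n + 2) 2 : ℝ) * r (x n)) := by
            rw [← Finset.sum_mul]
        _ = (∑ j ∈ Finset.range (x n + 1), (1 + (j:ℝ))^2 * β^j)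
              * ((Nat.choose (n - 2 * x n + 2) 2 : ℝ) * r (x n)) := by
            rw [hrefl]
        _ ≤ S * ((Nat.choose (n - 2 * x n + 2) 2 : ℝ) * r (x n)) :=
            mul_le_mul_of_nonneg_right (hSle _) hCbrx
    rw [hIcc, ← hsplit]
    calc (∑ i ∈ Finset.Ioc 0 (M-1), (Nat.choose (n - x n - i + 2) 2 : ℝ) * r i)
          + ∑ i ∈ Finset.Ioc (M-1) (x n), (Nat.choose (n - x n - i + 2) 2 : ℝ) * r i
        ≤ (Nat.choose (n - 2 * x n + 2) 2 : ℝ) * r (x n)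
          + S * ((Nat.choose (n - 2 * x n + 2) 2 : ℝ) * r (x n)) := add_le_add hsumA hsumB
      _ = (S + 1) * (Nat.choose (n - 2 * x n + 2) 2 : ℝ) * r (x n) := by ring
end

section
/- Let μ > 1, 0 < α < 1 and c > 0 be real numbers, let r : ℕ → ℝ satisfy r(0) = 0, r(n) > 0 and r(n+1) > r(n) for all n ≥ 1, and r(n)·n^μ·α^n → c as n → ∞, and fix a real γ with 0 < γ < 1. Let x : ℕ → ℕ satisfy x_n → ∞ and 2·x_n ≤ n for all n. With A^{(n)}_i := C(n − x_n − i + 2, 2)·r(i), one has [∑_{1 ≤ i < x_n − n^γ} A^{(n)}_i] / A^{(n)}_{x_n} → 0 as n → ∞. -/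
open Filter

theorem aux_tendsto_rnastruct (α γ s : ℝ) (hα0 : 0 < α) (hα1 : α < 1) (hγ : 0 < γ) :
    Tendsto (fun n : ℕ => (n:ℝ) ^ s * α ^ ((n:ℝ) ^ γ)) atTop (nhds 0) := by
  have hb : 0 < -Real.log α := by have := Real.log_neg hα0 hα1; linarith
  have h1 := tendsto_rpow_mul_exp_neg_mul_atTop_nhds_zero (s/γ) _ hb
  have h2 : Tendsto (fun x:ℝ => x ^ γ) atTop atTop := tendsto_rpow_atTop hγ
  have h3 := h1.comp (h2.comp tendsto_natCast_atTop_atTop)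
  apply h3.congr'
  filter_upwards [eventually_ge_atTop 1] with n hn
  have hn0 : (0:ℝ) < n := by exact_mod_cast hn
  simp only [Function.comp_apply]
  have e1 : ((n:ℝ) ^ γ) ^ (s/γ) = (n:ℝ) ^ s := by
    rw [← Real.rpow_mul hn0.le]
    congr 1
    field_simp
  have e2 : Real.exp (- -Real.log α * (n:ℝ)^γ) = α ^ ((n:ℝ)^γ) := by
    rw [Real.rpow_def_of_pos hα0]
    ring_nf
  rw [e1, e2]

set_option maxHeartbeats 1000000 in
open scoped Classical in
/- Eq. (36) (E:sumsmall) in the proof of the Claim: with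
`A^{(n)}_i = C(n-x_n-i+2,2)·r(i)`, the terms with index `1 ≤ i < x_n - n^γ`
contribute only `o(A^{(n)}_{x_n})`. -/
theorem stmt_15 (μ α c : ℝ) (hμ : 1 < μ) (hα0 : 0 < α) (hα1 : α < 1) (hc : 0 < c)
    (r : ℕ → ℝ) (hr0 : r 0 = 0) (hrpos : ∀ n, 1 ≤ n → 0 < r n)
    (hrmono : ∀ n, 1 ≤ n → r n < r (n + 1))
    (hasym : Tendsto (fun n : ℕ => r n * (n : ℝ) ^ μ * α ^ n) atTop (nhds c))
    (γ : ℝ) (hγ0 : 0 < γ) (hγ1 : γ < 1)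
    (x : ℕ → ℕ) (hx : Tendsto x atTop atTop) (hx2 : ∀ n, 2 * x n ≤ n)
    (A : ℕ → ℕ → ℝ)
    (hA : ∀ n i, A n i = (Nat.choose (n - x n - i + 2) 2 : ℝ) * r i) :
    Tendsto
      (fun n =>
        (∑ i ∈ (Finset.Icc 1 (x n)).filter
            (fun i : ℕ => (i : ℝ) < (x n : ℝ) - (n : ℝ) ^ γ), A n i) / A n (x n))
      atTop (nhds 0) := by
  have hmono : ∀ i j : ℕ, 1 ≤ i → i ≤ j → r i ≤ r j := by
    intro i j h1 hij
    induction hij with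
    | refl => exact le_rfl
    | @step k hk ih => exact ih.trans (hrmono k (h1.trans hk)).le
  have hrnn : ∀ k, 0 ≤ r k := by
    intro k
    rcases Nat.eq_zero_or_pos k with h | h
    · simp [h, hr0]
    · exact (hrpos k h).le
  -- quantitative asymptotics
  have hev : ∀ᶠ k : ℕ in atTop,
      r k * (k:ℝ)^μ * α^k ∈ Set.Ioo (c/2) (3*c/2) :=
    hasym (Ioo_mem_nhds (by linarith : c/2 < c) (by linarith : c < 3*c/2))
  rw [eventually_atTop] at hev
  obtain ⟨N₁, hN₁⟩ := hev
  set N₀ := max N₁ 1 with hN₀def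
  have hN₀1 : 1 ≤ N₀ := le_max_right _ _
  have hbound : ∀ k, N₀ ≤ k →
      c/2 < r k * (k:ℝ)^μ * α^k ∧ r k * (k:ℝ)^μ * α^k < 3*c/2 := by
    intro k hk
    have h := hN₁ k ((le_max_left _ _).trans hk)
    exact ⟨h.1, h.2⟩
  set K := max 3 (2 * r N₀ / c) with hKdef
  have hK3 : (3:ℝ) ≤ K := le_max_left _ _
  have hKr : 2 * r N₀ / c ≤ K := le_max_right _ _
  have hK0 : (0:ℝ) < K := lt_of_lt_of_le (by norm_num) hK3
  have hg : Tendsto (fun n : ℕ => 9 * K * ((n:ℝ)^(μ+3) * α ^ ((n:ℝ)^γ)))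
      atTop (nhds 0) := by
    have := (aux_tendsto_rnastruct α γ (μ+3) hα0 hα1 hγ0).const_mul (9*K)
    simpa using this
  have hμ0 : (0:ℝ) ≤ μ := by linarith
  apply tendsto_of_tendsto_of_tendsto_of_le_of_le' tendsto_const_nhds hg
  · filter_upwards with n
    apply div_nonneg
    · apply Finset.sum_nonneg
      intro i hi
      rw [hA]
      exact mul_nonneg (Nat.cast_nonneg _) (hrnn i)
    · rw [hA]
      exact mul_nonneg (Nat.cast_nonneg _) (hrnn _)
  · filter_upwards [hx.eventually_ge_atTop N₀, eventually_ge_atTop 1] with n hxn hn1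
    set S := (Finset.Icc 1 (x n)).filter
        (fun i : ℕ => (i : ℝ) < (x n : ℝ) - (n : ℝ) ^ γ) with hSdef
    have hgnn : 0 ≤ 9 * K * ((n:ℝ)^(μ+3) * α ^ ((n:ℝ)^γ)) := by positivity
    rcases S.eq_empty_or_nonempty with hSe | ⟨i₀, hi₀S⟩
    · rw [hSe]
      simpa using hgnn
    have hi₀ := hi₀S
    simp only [hSdef, Finset.mem_filter, Finset.mem_Icc] at hi₀
    obtain ⟨⟨hi₀1, hi₀x⟩, hi₀t⟩ := hi₀
    have ht0 : (0:ℝ) ≤ (n:ℝ)^γ := Real.rpow_nonneg (Nat.cast_nonneg n) γ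
    have hmem_le : ∀ i : ℕ, i ∈ S → i + ⌈(n:ℝ)^γ⌉₊ ≤ x n := by
      intro i hi
      simp only [hSdef, Finset.mem_filter, Finset.mem_Icc] at hi
      have hceil := Nat.ceil_lt_add_one ht0
      have h1 : ((i + ⌈(n:ℝ)^γ⌉₊ : ℕ) : ℝ) < ((x n : ℕ) : ℝ) + 1 := by
        push_cast
        linarith [hi.2]
      have h2 : i + ⌈(n:ℝ)^γ⌉₊ < x n + 1 := by exact_mod_cast h1
      omega
    set cl := ⌈(n:ℝ)^γ⌉₊ with hcl
    set m := x n - cl with hm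
    have hi₀m : i₀ + cl ≤ x n := hmem_le i₀ hi₀S
    have hclx : cl ≤ x n := by omega
    have hm1 : 1 ≤ m := by omega
    have hmem_m : ∀ i ∈ S, i ≤ m := by
      intro i hi
      have := hmem_le i hi
      omega
    have hmx : m ≤ x n := Nat.sub_le _ _
    have hxmn : x n ≤ n := by have := hx2 n; omega
    have htcl : (n:ℝ)^γ ≤ (cl:ℝ) := Nat.le_ceil _
    have hn0 : (0:ℝ) < n := by exact_mod_cast hn1
    have hx1 : 1 ≤ x n := le_trans hN₀1 hxn
    have hP : ((x n:ℝ))^μ ≤ (n:ℝ)^μ :=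
      Real.rpow_le_rpow (Nat.cast_nonneg _) (by exact_mod_cast hxmn) hμ0
    have hPpos : 0 < ((x n:ℝ))^μ :=
      Real.rpow_pos_of_pos (by exact_mod_cast hx1) μ
    have hQpos : 0 < α ^ (x n) := pow_pos hα0 _
    have hαtpos : 0 < α ^ ((n:ℝ)^γ) := Real.rpow_pos_of_pos hα0 _
    have hnμ0 : 0 ≤ (n:ℝ)^μ := Real.rpow_nonneg (Nat.cast_nonneg n) μ
    have hQsplit : α ^ (x n) = α ^ m * α ^ cl := by
      rw [← pow_add]
      congr 1
      omega
    have hcl_le : α ^ cl ≤ α ^ ((n:ℝ)^γ) := by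
      rw [← Real.rpow_natCast α cl]
      exact Real.rpow_le_rpow_of_exponent_ge hα0 hα1.le htcl
    have hxn_t : ((n:ℝ)^γ) ≤ (x n : ℝ) := le_trans htcl (by exact_mod_cast hclx)
    have hQle : α ^ (x n) ≤ α ^ ((n:ℝ)^γ) := by
      rw [← Real.rpow_natCast α (x n)]
      exact Real.rpow_le_rpow_of_exponent_ge hα0 hα1.le hxn_t
    have hlow := (hbound (x n) hxn).1
    have hPQ : 0 < ((x n:ℝ))^μ * α ^ (x n) := mul_pos hPpos hQpos
    -- key bound on r m
    have key : r m ≤ K * ((n:ℝ)^μ * α ^ ((n:ℝ)^γ)) * r (x n) := by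
      rw [← mul_le_mul_iff_of_pos_right hPQ]
      rcases le_or_gt N₀ m with hmN | hmN
      · have hup := (hbound m hmN).2
        have hm_one : (1:ℝ) ≤ (m:ℝ)^μ := by
          have : ((m:ℝ))^(0:ℝ) ≤ (m:ℝ)^μ :=
            Real.rpow_le_rpow_of_exponent_le (by exact_mod_cast hm1) hμ0
          simpa using this
        have hra : r m * α ^ m ≤ 3*c/2 := by
          have h0 : 0 ≤ r m * α ^ m := mul_nonneg (hrnn m) (pow_pos hα0 m).le
          have h3 : r m * α ^ m ≤ (r m * α ^ m) * (m:ℝ)^μ :=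
            le_mul_of_one_le_right h0 hm_one
          have h4 : (r m * α ^ m) * (m:ℝ)^μ = r m * (m:ℝ)^μ * α ^ m := by ring
          linarith
        calc r m * (((x n:ℝ))^μ * α ^ (x n))
            = (r m * α ^ m) * α ^ cl * ((x n:ℝ))^μ := by rw [hQsplit]; ring
          _ ≤ ((3*c/2) * α ^ ((n:ℝ)^γ)) * ((n:ℝ))^μ := by
              apply mul_le_mul _ hP hPpos.le (by positivity)
              exact mul_le_mul hra hcl_le (pow_pos hα0 _).le (by linarith)
          _ = (3*(c/2)) * (((n:ℝ))^μ * α ^ ((n:ℝ)^γ)) := by ring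
          _ ≤ (K*(c/2)) * (((n:ℝ))^μ * α ^ ((n:ℝ)^γ)) := by
              apply mul_le_mul_of_nonneg_right _ (by positivity)
              have hc2 : (0:ℝ) ≤ c/2 := by linarith
              exact mul_le_mul_of_nonneg_right hK3 hc2
          _ ≤ K * (((n:ℝ))^μ * α ^ ((n:ℝ)^γ)) * (r (x n) * (((x n:ℝ))^μ * α ^ (x n))) := by
              have h1 : c/2 ≤ r (x n) * (((x n:ℝ))^μ * α ^ (x n)) := by
                calc c/2 ≤ r (x n) * ((x n:ℝ))^μ * α ^ (x n) := hlow.le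
                  _ = r (x n) * (((x n:ℝ))^μ * α ^ (x n)) := mul_assoc _ _ _
              have h2 : 0 ≤ K * (((n:ℝ))^μ * α ^ ((n:ℝ)^γ)) := by positivity
              calc K * (c/2) * (((n:ℝ))^μ * α ^ ((n:ℝ)^γ))
                  = (K * (((n:ℝ))^μ * α ^ ((n:ℝ)^γ))) * (c/2) := by ring
                _ ≤ (K * (((n:ℝ))^μ * α ^ ((n:ℝ)^γ))) * (r (x n) * (((x n:ℝ))^μ * α ^ (x n))) :=
                    mul_le_mul_of_nonneg_left h1 h2
          _ = K * ((n:ℝ)^μ * α ^ ((n:ℝ)^γ)) * r (x n) * (((x n:ℝ))^μ * α ^ (x n)) := by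
              ring
      · have hrm' : r m ≤ r N₀ := hmono m N₀ hm1 hmN.le
        calc r m * (((x n:ℝ))^μ * α ^ (x n))
            ≤ r N₀ * (((n:ℝ))^μ * α ^ ((n:ℝ)^γ)) :=
              mul_le_mul hrm' (mul_le_mul hP hQle hQpos.le hnμ0) hPQ.le (hrnn _)
          _ = ((2 * r N₀ / c) * (c/2)) * (((n:ℝ))^μ * α ^ ((n:ℝ)^γ)) := by
              field_simp
          _ ≤ (K * (c/2)) * (((n:ℝ))^μ * α ^ ((n:ℝ)^γ)) := by
              apply mul_le_mul_of_nonneg_right _ (by positivity)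
              have hc2 : (0:ℝ) ≤ c/2 := by linarith
              exact mul_le_mul_of_nonneg_right hKr hc2
          _ ≤ K * (((n:ℝ))^μ * α ^ ((n:ℝ)^γ)) * (r (x n) * (((x n:ℝ))^μ * α ^ (x n))) := by
              have h1 : c/2 ≤ r (x n) * (((x n:ℝ))^μ * α ^ (x n)) := by
                calc c/2 ≤ r (x n) * ((x n:ℝ))^μ * α ^ (x n) := hlow.le
                  _ = r (x n) * (((x n:ℝ))^μ * α ^ (x n)) := mul_assoc _ _ _
              have h2 : 0 ≤ K * (((n:ℝ))^μ * α ^ ((n:ℝ)^γ)) := by positivity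
              calc K * (c/2) * (((n:ℝ))^μ * α ^ ((n:ℝ)^γ))
                  = (K * (((n:ℝ))^μ * α ^ ((n:ℝ)^γ))) * (c/2) := by ring
                _ ≤ (K * (((n:ℝ))^μ * α ^ ((n:ℝ)^γ))) * (r (x n) * (((x n:ℝ))^μ * α ^ (x n))) :=
                    mul_le_mul_of_nonneg_left h1 h2
          _ = K * ((n:ℝ)^μ * α ^ ((n:ℝ)^γ)) * r (x n) * (((x n:ℝ))^μ * α ^ (x n)) := by
              ring
    -- bound each term of the sum
    have hterm : ∀ i ∈ S, A n i ≤ ((n:ℝ)+2)^2 * r m := by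
      intro i hi
      have hiS := hi
      simp only [hSdef, Finset.mem_filter, Finset.mem_Icc] at hiS
      rw [hA]
      have hch : ((n - x n - i + 2).choose 2 : ℝ) ≤ ((n:ℝ)+2)^2 := by
        have h1 : (n - x n - i + 2).choose 2 ≤ (n+2).choose 2 :=
          Nat.choose_le_choose 2 (by omega)
        have h2 : (n+2).choose 2 ≤ (n+2)^2 := by
          rw [Nat.choose_two_right]
          calc (n+2)*(n+2-1)/2 ≤ (n+2)*(n+2-1) := Nat.div_le_self _ _
            _ ≤ (n+2)*(n+2) := Nat.mul_le_mul_left _ (Nat.sub_le _ _)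
            _ = (n+2)^2 := (sq _).symm
        calc ((n - x n - i + 2).choose 2 : ℝ) ≤ ((n+2).choose 2 : ℝ) := by
              exact_mod_cast h1
          _ ≤ (((n+2)^2 : ℕ) : ℝ) := by exact_mod_cast h2
          _ = ((n:ℝ)+2)^2 := by push_cast; ring
      exact mul_le_mul hch (hmono i m hiS.1.1 (hmem_m i hi)) (hrnn i) (by positivity)
    have hcard : (S.card : ℝ) ≤ (n:ℝ) := by
      have h1 : S.card ≤ (Finset.Icc 1 (x n)).card := Finset.card_filter_le _ _
      have h2 : (Finset.Icc 1 (x n)).card = x n := by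
        rw [Nat.card_Icc]
        omega
      exact_mod_cast le_trans h1 (by omega)
    have hrmnn : 0 ≤ r m := hrnn m
    have hsum : ∑ i ∈ S, A n i ≤ (n:ℝ) * (((n:ℝ)+2)^2 * r m) := by
      calc ∑ i ∈ S, A n i ≤ S.card • (((n:ℝ)+2)^2 * r m) :=
            Finset.sum_le_card_nsmul _ _ _ hterm
        _ = (S.card : ℝ) * (((n:ℝ)+2)^2 * r m) := nsmul_eq_mul _ _
        _ ≤ (n:ℝ) * (((n:ℝ)+2)^2 * r m) :=
            mul_le_mul_of_nonneg_right hcard (by positivity)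
    have hrx : 0 < r (x n) := hrpos _ hx1
    have hAx : r (x n) ≤ A n (x n) := by
      rw [hA]
      have h2 : 2 ≤ n - x n - x n + 2 := by omega
      have hone : (1:ℝ) ≤ ((n - x n - x n + 2).choose 2 : ℝ) := by
        exact_mod_cast Nat.succ_le_of_lt (Nat.choose_pos h2)
      exact le_mul_of_one_le_left hrx.le hone
    have hApos : 0 < A n (x n) := lt_of_lt_of_le hrx hAx
    have hsum_nn : 0 ≤ ∑ i ∈ S, A n i := by
      apply Finset.sum_nonneg
      intro i hi
      rw [hA]
      exact mul_nonneg (Nat.cast_nonneg _) (hrnn i)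
    have hn1' : (1:ℝ) ≤ (n:ℝ) := by exact_mod_cast hn1
    have hpoly : (n:ℝ) * ((n:ℝ)+2)^2 ≤ 9 * (n:ℝ)^3 := by
      nlinarith [hn1', mul_le_mul_of_nonneg_left (mul_le_mul_of_nonneg_left hn1' hn0.le) hn0.le,
        mul_le_mul_of_nonneg_left hn1' hn0.le]
    have hsplit : (n:ℝ)^(μ+3) = (n:ℝ)^μ * (n:ℝ)^3 := by
      rw [Real.rpow_add hn0, show ((3:ℝ)) = ((3:ℕ):ℝ) by norm_num,
        Real.rpow_natCast]
    calc (∑ i ∈ S, A n i) / A n (x n)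
        ≤ (∑ i ∈ S, A n i) / r (x n) := div_le_div_of_nonneg_left hsum_nn hrx hAx
      _ ≤ ((n:ℝ) * (((n:ℝ)+2)^2 * (K * ((n:ℝ)^μ * α ^ ((n:ℝ)^γ)) * r (x n)))) / r (x n) := by
          have hnum : ∑ i ∈ S, A n i ≤
              (n:ℝ) * (((n:ℝ)+2)^2 * (K * ((n:ℝ)^μ * α ^ ((n:ℝ)^γ)) * r (x n))) := by
            refine hsum.trans ?_
            have := mul_le_mul_of_nonneg_left key (by positivity : (0:ℝ) ≤ ((n:ℝ)+2)^2)
            exact mul_le_mul_of_nonneg_left this hn0.le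
          have hb0 : 0 ≤ (n:ℝ) * (((n:ℝ)+2)^2 * (K * ((n:ℝ)^μ * α ^ ((n:ℝ)^γ)) * r (x n))) :=
            hsum_nn.trans hnum
          exact div_le_div₀ hb0 hnum hrx le_rfl
      _ = (n:ℝ) * ((n:ℝ)+2)^2 * K * ((n:ℝ)^μ * α ^ ((n:ℝ)^γ)) := by
          field_simp
      _ ≤ 9 * K * ((n:ℝ)^(μ+3) * α ^ ((n:ℝ)^γ)) := by
          rw [hsplit]
          have h5 := mul_le_mul_of_nonneg_right hpoly
            (mul_nonneg hK0.le (mul_nonneg hnμ0 hαtpos.le))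
          calc (n:ℝ) * ((n:ℝ)+2)^2 * K * ((n:ℝ)^μ * α ^ ((n:ℝ)^γ))
              = ((n:ℝ) * ((n:ℝ)+2)^2) * (K * ((n:ℝ)^μ * α ^ ((n:ℝ)^γ))) := by ring
            _ ≤ (9 * (n:ℝ)^3) * (K * ((n:ℝ)^μ * α ^ ((n:ℝ)^γ))) := h5
            _ = 9 * K * ((n:ℝ)^μ * (n:ℝ)^3 * α ^ ((n:ℝ)^γ)) := by ring
end

section
/- Let μ > 1, 0 < α < 1 and c > 0 be real numbers, let r : ℕ → ℝ satisfy r(0) = 0, r(n) > 0 and r(n+1) > r(n) for all n ≥ 1, and r(n)·n^μ·α^n → c as n → ∞, and fix a real γ with 0 < γ < 1. Let x : ℕ → ℕ satisfy x_n → ∞ and 2·x_n ≤ n for all n, and set A^{(n)}_i := C(n − x_n − i + 2, 2)·r(i) for 0 ≤ i ≤ x_n (with r(i) = 0 understood for negative arguments). Then limsup_{n→∞} [∑_{j=0}^{⌊n^γ⌋} A^{(n)}_{x_n − j}] / A^{(n)}_{x_n} ≤ 1/(1−α)³. -/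
open Filter

lemma chain_bound {r : ℕ → ℝ} {β : ℝ} (hβ : 0 ≤ β) {M : ℕ}
    (h : ∀ m, M ≤ m → r m ≤ β * r (m + 1)) :
    ∀ (b a : ℕ), M ≤ a → r a ≤ β ^ b * r (a + b) := by
  intro b
  induction b with
  | zero => intro a ha; simp
  | succ b ih =>
    intro a ha
    have h1 := h a ha
    have h2 := ih (a + 1) (by omega)
    have e : a + 1 + b = a + (b + 1) := by omega
    calc r a ≤ β * r (a + 1) := h1
      _ ≤ β * (β ^ b * r (a + 1 + b)) := mul_le_mul_of_nonneg_left h2 hβ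
      _ = β ^ (b + 1) * r (a + (b + 1)) := by rw [e]; ring

lemma choose_two_bound (m j : ℕ) :
    ((Nat.choose (m + j + 2) 2 : ℕ) : ℝ) ≤ (Nat.choose (j + 2) 2 : ℕ) * (Nat.choose (m + 2) 2 : ℕ) := by
  rw [Nat.cast_choose_two, Nat.cast_choose_two, Nat.cast_choose_two]
  push_cast
  have hm : (0:ℝ) ≤ m := Nat.cast_nonneg m
  have hj : (0:ℝ) ≤ j := Nat.cast_nonneg j
  nlinarith [mul_nonneg hm hj, mul_nonneg (mul_nonneg hm hj) hm, mul_nonneg (mul_nonneg hm hj) hj]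

lemma ratio_tendsto {μ α c : ℝ} (hα0 : 0 < α) (hc : 0 < c) {r : ℕ → ℝ}
    (hrpos : ∀ n, 1 ≤ n → 0 < r n)
    (hasym : Tendsto (fun n : ℕ => r n * (n : ℝ) ^ μ * α ^ n) atTop (nhds c)) :
    Tendsto (fun n : ℕ => r n / r (n + 1)) atTop (nhds α) := by
  have hg : Tendsto (fun n : ℕ => r (n + 1) * ((n + 1 : ℕ) : ℝ) ^ μ * α ^ (n + 1)) atTop (nhds c) :=
    hasym.comp (tendsto_add_atTop_nat 1)
  have hdiv : Tendsto (fun n : ℕ => (r n * (n : ℝ) ^ μ * α ^ n) /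
      (r (n + 1) * ((n + 1 : ℕ) : ℝ) ^ μ * α ^ (n + 1))) atTop (nhds 1) := by
    have := hasym.div hg (ne_of_gt hc)
    rwa [div_self (ne_of_gt hc)] at this
  have hbase : Tendsto (fun n : ℕ => ((n : ℝ) + 1) / (n : ℝ)) atTop (nhds 1) := by
    have h1 : Tendsto (fun n : ℕ => 1 + 1 / (n : ℝ)) atTop (nhds 1) := by
      simpa using tendsto_const_nhds.add (tendsto_one_div_atTop_nhds_zero_nat (𝕜 := ℝ))
    apply h1.congr'
    filter_upwards [eventually_ge_atTop 1] with n hn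
    have : (0:ℝ) < n := by exact_mod_cast hn
    field_simp
  have hq : Tendsto (fun n : ℕ => (((n : ℝ) + 1) / (n : ℝ)) ^ μ) atTop (nhds 1) := by
    have := hbase.rpow_const (p := μ) (Or.inl one_ne_zero)
    rwa [Real.one_rpow] at this
  have := (hdiv.mul hq).mul_const α
  rw [one_mul, one_mul] at this
  apply this.congr'
  filter_upwards [eventually_ge_atTop 1] with n hn
  have hn0 : (0:ℝ) < n := by exact_mod_cast hn
  have hp : (0:ℝ) < (n : ℝ) ^ μ := Real.rpow_pos_of_pos hn0 μ
  have hq' : (0:ℝ) < ((n : ℝ) + 1) ^ μ := Real.rpow_pos_of_pos (by linarith) μ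
  have hb : 0 < r (n + 1) := hrpos (n + 1) (by omega)
  have hα : (0:ℝ) < α ^ n := pow_pos hα0 n
  have hdr : (((n : ℝ) + 1) / (n : ℝ)) ^ μ = ((n : ℝ) + 1) ^ μ / (n : ℝ) ^ μ :=
    Real.div_rpow (by linarith) (le_of_lt hn0) μ
  push_cast
  rw [hdr, pow_succ]
  field_simp

lemma rbeta_atTop {μ α β c : ℝ} (hα0 : 0 < α) (hαβ : α < β) (hc : 0 < c) {r : ℕ → ℝ}
    (hrpos : ∀ n, 1 ≤ n → 0 < r n)
    (hasym : Tendsto (fun n : ℕ => r n * (n : ℝ) ^ μ * α ^ n) atTop (nhds c)) :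
    Tendsto (fun m : ℕ => r m * β ^ m) atTop atTop := by
  set k := ⌈μ⌉₊ with hk
  have hβ0 : 0 < β := lt_trans hα0 hαβ
  have hq1 : α / β < 1 := (div_lt_one hβ0).2 hαβ
  have hq0 : 0 < α / β := div_pos hα0 hβ0
  have h0 : Tendsto (fun m : ℕ => (m : ℝ) ^ k * (α / β) ^ m) atTop (nhds 0) :=
    tendsto_pow_const_mul_const_pow_of_lt_one k hq0.le hq1
  have h0' : Tendsto (fun m : ℕ => (m : ℝ) ^ k * (α / β) ^ m) atTop (nhdsWithin 0 (Set.Ioi 0)) := by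
    apply tendsto_nhdsWithin_of_tendsto_nhds_of_eventually_within _ h0
    filter_upwards [eventually_ge_atTop 1] with m hm
    have hm0 : (0:ℝ) < m := by exact_mod_cast hm
    exact Set.mem_Ioi.2 (mul_pos (pow_pos hm0 k) (pow_pos hq0 m))
  have hinv : Tendsto (fun m : ℕ => ((m : ℝ) ^ k * (α / β) ^ m)⁻¹) atTop atTop :=
    h0'.inv_tendsto_nhdsGT_zero
  have hmul : Tendsto (fun m : ℕ =>
      (r m * (m : ℝ) ^ μ * α ^ m) * ((m : ℝ) ^ k * (α / β) ^ m)⁻¹) atTop atTop :=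
    hasym.pos_mul_atTop hc hinv
  apply tendsto_atTop_mono' atTop _ hmul
  filter_upwards [eventually_ge_atTop 1] with m hm
  have hm0 : (0:ℝ) < m := by exact_mod_cast hm
  have hpμ : (0:ℝ) < (m : ℝ) ^ μ := Real.rpow_pos_of_pos hm0 μ
  have hμk : (m : ℝ) ^ μ ≤ (m : ℝ) ^ k := by
    have h1 : (1:ℝ) ≤ m := by exact_mod_cast hm
    have := Real.rpow_le_rpow_of_exponent_le h1 (Nat.le_ceil μ)
    rwa [Real.rpow_natCast] at this
  have hαm : (0:ℝ) < α ^ m := pow_pos hα0 m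
  have hβm : (0:ℝ) < β ^ m := pow_pos hβ0 m
  have hmk : (0:ℝ) < (m : ℝ) ^ k := pow_pos hm0 k
  have hrm : 0 ≤ r m := (hrpos m hm).le
  have hfnn : 0 ≤ r m * (m : ℝ) ^ μ * α ^ m := by positivity
  have e : ((m : ℝ) ^ k * (α / β) ^ m)⁻¹ = β ^ m / (α ^ m * (m : ℝ) ^ k) := by
    rw [div_pow]
    field_simp
  have hle : ((m : ℝ) ^ k * (α / β) ^ m)⁻¹ ≤ β ^ m / (α ^ m * (m : ℝ) ^ μ) := by
    rw [e]
    exact div_le_div_of_nonneg_left hβm.le (mul_pos hαm hpμ)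
      (mul_le_mul_of_nonneg_left hμk hαm.le)
  calc (r m * (m : ℝ) ^ μ * α ^ m) * ((m : ℝ) ^ k * (α / β) ^ m)⁻¹
      ≤ (r m * (m : ℝ) ^ μ * α ^ m) * (β ^ m / (α ^ m * (m : ℝ) ^ μ)) :=
        mul_le_mul_of_nonneg_left hle hfnn
    _ = r m * β ^ m := by field_simp


/- Second step in the proof of the Claim: the terms of the sum with index
within `n^γ` of `x_n` contribute at most `(1/(1-α)³)·A^{(n)}_{x_n}`:
`limsup (∑_{j=0}^{⌊n^γ⌋} A^{(n)}_{x_n-j})/A^{(n)}_{x_n} ≤ 1/(1-α)³`.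
(For `j > x_n` the natural subtraction gives `A^{(n)}_0 = 0` since `r 0 = 0`.) -/
theorem stmt_16 (μ α c : ℝ) (hμ : 1 < μ) (hα0 : 0 < α) (hα1 : α < 1) (hc : 0 < c)
    (r : ℕ → ℝ) (hr0 : r 0 = 0) (hrpos : ∀ n, 1 ≤ n → 0 < r n)
    (hrmono : ∀ n, 1 ≤ n → r n < r (n + 1))
    (hasym : Tendsto (fun n : ℕ => r n * (n : ℝ) ^ μ * α ^ n) atTop (nhds c))
    (γ : ℝ) (hγ0 : 0 < γ) (hγ1 : γ < 1)
    (x : ℕ → ℕ) (hx : Tendsto x atTop atTop) (hx2 : ∀ n, 2 * x n ≤ n)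
    (A : ℕ → ℕ → ℝ)
    (hA : ∀ n i, A n i = (Nat.choose (n - x n - i + 2) 2 : ℝ) * r i) :
    atTop.limsup
        (fun n : ℕ =>
          (∑ j ∈ Finset.range (⌊(n : ℝ) ^ γ⌋₊ + 1), A n (x n - j)) / A n (x n)) ≤
      1 / (1 - α) ^ 3 := by
  have hrnn : ∀ n, 0 ≤ r n := by
    intro n
    rcases Nat.eq_zero_or_pos n with h | h
    · simp [h, hr0]
    · exact (hrpos n h).le
  have hrmono' : Monotone r := by
    apply monotone_nat_of_le_succ
    intro n
    rcases Nat.eq_zero_or_pos n with h | h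
    · subst h; rw [hr0]; exact (hrpos 1 le_rfl).le
    · exact (hrmono n h).le
  have hAnn : ∀ n i, 0 ≤ A n i := by
    intro n i
    rw [hA]
    exact mul_nonneg (Nat.cast_nonneg _) (hrnn i)
  have hfnn : ∀ n : ℕ,
      0 ≤ (∑ j ∈ Finset.range (⌊(n : ℝ) ^ γ⌋₊ + 1), A n (x n - j)) / A n (x n) := by
    intro n
    exact div_nonneg (Finset.sum_nonneg fun j _ => hAnn n _) (hAnn n (x n))
  -- Key step: for every β ∈ (α, 1), the limsup is at most 1/(1-β)^3.
  have key : ∀ β : ℝ, α < β → β < 1 →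
      atTop.limsup
        (fun n : ℕ =>
          (∑ j ∈ Finset.range (⌊(n : ℝ) ^ γ⌋₊ + 1), A n (x n - j)) / A n (x n)) ≤
      1 / (1 - β) ^ 3 := by
    intro β hαβ hβ1
    have hβ0 : 0 < β := lt_trans hα0 hαβ
    -- eventual ratio bound
    have hratio := ratio_tendsto hα0 hc hrpos hasym
    have hev : ∀ᶠ n in atTop, r n / r (n + 1) ≤ β ∧ 1 ≤ n := by
      filter_upwards [hratio.eventually_le_const hαβ, eventually_ge_atTop 1] with n h1 h2
      exact ⟨h1, h2⟩
    obtain ⟨M, hM⟩ := eventually_atTop.1 hev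
    have hM1 : 1 ≤ M := (hM M le_rfl).2
    have hstep : ∀ m, M ≤ m → r m ≤ β * r (m + 1) := by
      intro m hm
      have h := (hM m hm).1
      have hpos := hrpos (m + 1) (by omega)
      rw [div_le_iff₀ hpos] at h
      linarith [h]
    -- eventual largeness of r (x n) * β ^ (x n)
    have htop := (rbeta_atTop hα0 hαβ hc hrpos hasym).comp hx
    have hbig : ∀ᶠ n in atTop, r M ≤ r (x n) * β ^ (x n) :=
      htop.eventually (eventually_ge_atTop (r M))
    have hxev : ∀ᶠ n in atTop, M + 1 ≤ x n := hx.eventually (eventually_ge_atTop (M + 1))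
    apply limsup_le_of_le (isCoboundedUnder_le_of_le atTop hfnn)
    filter_upwards [hbig, hxev] with n hbign hxn
    set X := x n with hX
    set N := ⌊(n : ℝ) ^ γ⌋₊ + 1
    have hX1 : 1 ≤ X := by omega
    have h2X : 2 * X ≤ n := hx2 n
    have hAx : A n X = (Nat.choose (n - 2 * X + 2) 2 : ℝ) * r X := by
      rw [hA]
      congr 3
      omega
    have hAxpos : 0 < A n X := by
      rw [hAx]
      apply mul_pos _ (hrpos X hX1)
      exact_mod_cast Nat.cast_pos.2 (Nat.choose_pos (by omega))
    -- per-term bound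
    have hterm : ∀ j : ℕ, A n (X - j) ≤ (Nat.choose (j + 2) 2 : ℝ) * β ^ j * A n X := by
      intro j
      have hrhsnn : 0 ≤ (Nat.choose (j + 2) 2 : ℝ) * β ^ j * A n X := by
        apply mul_nonneg (mul_nonneg (Nat.cast_nonneg _) (pow_nonneg hβ0.le j)) hAxpos.le
      by_cases hj : j ≤ X
      · -- the r-factor bound
        have hrb : r (X - j) ≤ β ^ j * r X := by
          by_cases hMj : M ≤ X - j
          · have := chain_bound hβ0.le hstep j (X - j) hMj
            rwa [show X - j + j = X by omega] at this
          · have h1 : r (X - j) ≤ r M := hrmono' (by omega)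
            have h2 : β ^ X * r X ≤ β ^ j * r X := by
              apply mul_le_mul_of_nonneg_right _ (hrnn X)
              exact pow_le_pow_of_le_one hβ0.le hβ1.le hj
            calc r (X - j) ≤ r M := h1
              _ ≤ r X * β ^ X := hbign
              _ = β ^ X * r X := by ring
              _ ≤ β ^ j * r X := h2
        -- the binomial factor bound
        have hidx : n - x n - (X - j) + 2 = (n - 2 * X) + j + 2 := by omega
        have hcb : ((Nat.choose (n - x n - (X - j) + 2) 2 : ℕ) : ℝ) ≤
            (Nat.choose (j + 2) 2 : ℝ) * (Nat.choose (n - 2 * X + 2) 2 : ℝ) := by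
          rw [hidx, show (n - 2 * X) + j + 2 = (n - 2 * X) + j + 2 from rfl]
          exact choose_two_bound (n - 2 * X) j
        rw [hA, hAx]
        calc ((Nat.choose (n - x n - (X - j) + 2) 2 : ℕ) : ℝ) * r (X - j)
            ≤ ((Nat.choose (j + 2) 2 : ℝ) * (Nat.choose (n - 2 * X + 2) 2 : ℝ)) * (β ^ j * r X) := by
              apply mul_le_mul hcb hrb (hrnn _)
              positivity
          _ = (Nat.choose (j + 2) 2 : ℝ) * β ^ j *
              ((Nat.choose (n - 2 * X + 2) 2 : ℝ) * r X) := by ring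
      · -- j > X : the term vanishes
        have : X - j = 0 := by omega
        rw [hA, this, hr0, mul_zero]
        exact hrhsnn
    -- sum the bound
    have hsum : (∑ j ∈ Finset.range N, A n (X - j)) ≤
        (∑ j ∈ Finset.range N, (Nat.choose (j + 2) 2 : ℝ) * β ^ j) * A n X := by
      rw [Finset.sum_mul]
      exact Finset.sum_le_sum fun j _ => hterm j
    have hnorm : ‖β‖ < 1 := by rw [Real.norm_eq_abs, abs_of_pos hβ0]; exact hβ1
    have hsummable : Summable (fun j : ℕ => ((j + 2).choose 2 : ℝ) * β ^ j) :=
      summable_choose_mul_geometric_of_norm_lt_one 2 hnorm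
    have htsum : ∑' j : ℕ, ((j + 2).choose 2 : ℝ) * β ^ j = 1 / (1 - β) ^ 3 :=
      tsum_choose_mul_geometric_of_norm_lt_one 2 hnorm
    have hpartial : (∑ j ∈ Finset.range N, (Nat.choose (j + 2) 2 : ℝ) * β ^ j) ≤
        1 / (1 - β) ^ 3 := by
      rw [← htsum]
      exact hsummable.sum_le_tsum _ (fun j _ => by positivity)
    rw [div_le_iff₀ hAxpos]
    calc (∑ j ∈ Finset.range N, A n (X - j))
        ≤ (∑ j ∈ Finset.range N, (Nat.choose (j + 2) 2 : ℝ) * β ^ j) * A n X := hsum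
      _ ≤ (1 / (1 - β) ^ 3) * A n X := by
          apply mul_le_mul_of_nonneg_right hpartial hAxpos.le
  -- Pass to the limit β → α⁺.
  set L := atTop.limsup
      (fun n : ℕ =>
        (∑ j ∈ Finset.range (⌊(n : ℝ) ^ γ⌋₊ + 1), A n (x n - j)) / A n (x n)) with hL
  have hb : Tendsto (fun k : ℕ => α + (1 - α) / ((k : ℝ) + 2)) atTop (nhds α) := by
    have h2 : Tendsto (fun k : ℕ => (1 - α) / ((k : ℝ) + 2)) atTop (nhds 0) := by
      apply Tendsto.div_atTop tendsto_const_nhds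
      exact tendsto_atTop_add_const_right atTop 2 tendsto_natCast_atTop_atTop
    simpa using tendsto_const_nhds.add h2
  have hf : Tendsto (fun k : ℕ => 1 / (1 - (α + (1 - α) / ((k : ℝ) + 2))) ^ 3) atTop
      (nhds (1 / (1 - α) ^ 3)) := by
    apply Tendsto.div tendsto_const_nhds ((tendsto_const_nhds.sub hb).pow 3)
    exact pow_ne_zero 3 (by linarith)
  apply ge_of_tendsto hf
  filter_upwards with k
  have hk2 : (0:ℝ) < (k : ℝ) + 2 := by positivity
  have hd0 : 0 < (1 - α) / ((k : ℝ) + 2) := div_pos (by linarith) hk2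
  have hd1 : (1 - α) / ((k : ℝ) + 2) < 1 - α := by
    rw [div_lt_iff₀ hk2]
    nlinarith
  exact key _ (by linarith) (by linarith)
end

section
/- Let μ > 1, 0 < α < 1 and c > 0 be real numbers, and let a : ℕ → ℝ be nonnegative with a(n)·n^μ·α^n → c as n → ∞. Then A := ∑_{x=0}^∞ a(x)·α^x converges, and the convolution square b(n) := ∑_{x=0}^n a(x)·a(n − x) satisfies b(n)·n^μ·α^n → 2·c·A as n → ∞. -/
open Filter

/- Convolution-square transfer lemma: if `a(n)·n^μ·α^n → c` then
`A = ∑ a(x)·α^x` converges and the convolution square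
`b(n) = ∑_{x=0}^n a(x)·a(n-x)` satisfies `b(n)·n^μ·α^n → 2cA`. -/
theorem stmt_18 (μ α c : ℝ) (hμ : 1 < μ) (hα0 : 0 < α) (hα1 : α < 1) (hc : 0 < c)
    (a : ℕ → ℝ) (hapos : ∀ n, 0 ≤ a n)
    (hasym : Tendsto (fun n : ℕ => a n * (n : ℝ) ^ μ * α ^ n) atTop (nhds c))
    (b : ℕ → ℝ)
    (hb : ∀ n, b n = ∑ x ∈ Finset.range (n + 1), a x * a (n - x)) :
    Summable (fun x : ℕ => a x * α ^ x) ∧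
      Tendsto (fun n : ℕ => b n * (n : ℝ) ^ μ * α ^ n) atTop
        (nhds (2 * c * ∑' x : ℕ, a x * α ^ x)) := by
  set f : ℕ → ℝ := fun n => a n * α ^ n with hfdef
  have hf0 : ∀ n, 0 ≤ f n := fun n => mul_nonneg (hapos n) (pow_pos hα0 n).le
  have hasym' : Tendsto (fun n : ℕ => f n * (n : ℝ) ^ μ) atTop (nhds c) := by
    refine hasym.congr fun n => ?_
    simp only [hfdef]; ring
  -- global bound on f n * n^μ
  obtain ⟨C, hC⟩ := hasym'.bddAbove_range
  have hCb : ∀ n : ℕ, f n * (n : ℝ) ^ μ ≤ C := fun n => hC (Set.mem_range_self n)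
  have hC0 : (0 : ℝ) ≤ C :=
    le_trans (mul_nonneg (hf0 1) (Real.rpow_nonneg (by norm_num) μ)) (hCb 1)
  -- summability of f
  have hsumf : Summable f := by
    rw [← summable_nat_add_iff 1]
    have hstd : Summable (fun n : ℕ => C * (1 / (n : ℝ) ^ μ)) :=
      (Real.summable_one_div_nat_rpow.2 hμ).mul_left C
    have hstd' : Summable (fun n : ℕ => C * (1 / ((n : ℝ) + 1) ^ μ)) := by
      refine ((summable_nat_add_iff 1).2 hstd).congr fun n => ?_
      push_cast; ring_nf
    refine hstd'.of_nonneg_of_le (fun n => hf0 _) fun n => ?_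
    have hpos : (0 : ℝ) < ((n : ℝ) + 1) ^ μ := Real.rpow_pos_of_pos (by positivity) μ
    rw [mul_one_div, le_div_iff₀ hpos]
    have h1 := hCb (n + 1)
    push_cast at h1 ⊢
    exact h1
  refine ⟨hsumf, ?_⟩
  -- per-x limit of f (n - x) * n ^ μ
  have hlim : ∀ x : ℕ, Tendsto (fun n : ℕ => f (n - x) * (n : ℝ) ^ μ) atTop (nhds c) := by
    intro x
    have h1 : Tendsto (fun n : ℕ => f (n - x) * ((n - x : ℕ) : ℝ) ^ μ) atTop (nhds c) :=
      hasym'.comp (tendsto_sub_atTop_nat x)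
    have h0 : Tendsto (fun n : ℕ => (x : ℝ) / ((n - x : ℕ) : ℝ)) atTop (nhds 0) :=
      tendsto_const_nhds.div_atTop
        (tendsto_natCast_atTop_atTop.comp (tendsto_sub_atTop_nat x))
    have key : ∀ᶠ n : ℕ in atTop,
        (1 : ℝ) + (x : ℝ) / ((n - x : ℕ) : ℝ) = (n : ℝ) / ((n - x : ℕ) : ℝ) := by
      filter_upwards [eventually_ge_atTop (x + 1)] with n hn
      have hxle : x ≤ n := by omega
      have hposn : (0 : ℝ) < ((n - x : ℕ) : ℝ) := by
        have : 0 < n - x := by omega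
        exact_mod_cast this
      have hcast : ((n - x : ℕ) : ℝ) = (n : ℝ) - x := by
        push_cast [Nat.cast_sub hxle]; ring
      have hne : (n : ℝ) - x ≠ 0 := by rw [← hcast]; exact hposn.ne'
      rw [hcast, one_add_div hne]
      congr 1
      ring
    have hr : Tendsto (fun n : ℕ => (n : ℝ) / ((n - x : ℕ) : ℝ)) atTop (nhds 1) := by
      have h0' : Tendsto (fun n : ℕ => (1 : ℝ) + (x : ℝ) / ((n - x : ℕ) : ℝ)) atTop
          (nhds (1 + 0)) := tendsto_const_nhds.add h0
      rw [add_zero] at h0'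
      exact h0'.congr' key
    have h2 : Tendsto (fun n : ℕ => ((n : ℝ) / ((n - x : ℕ) : ℝ)) ^ μ) atTop (nhds 1) := by
      have := hr.rpow_const (p := μ) (Or.inl one_ne_zero)
      simpa using this
    have hmul := h1.mul h2
    rw [mul_one] at hmul
    refine hmul.congr' ?_
    filter_upwards [eventually_ge_atTop (x + 1)] with n hn
    have hposn : (0 : ℝ) < ((n - x : ℕ) : ℝ) := by
      have : 0 < n - x := by omega
      exact_mod_cast this
    have hne : ((n - x : ℕ) : ℝ) ^ μ ≠ 0 := (Real.rpow_pos_of_pos hposn μ).ne'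
    rw [Real.div_rpow (Nat.cast_nonneg n) hposn.le]
    field_simp
  -- the convolution pieces
  set F : ℕ → ℕ → ℝ :=
    fun n x => if 2 * x ≤ n then f x * f (n - x) * (n : ℝ) ^ μ else 0 with hFdef
  set G : ℕ → ℕ → ℝ :=
    fun n x => if 2 * x < n then f x * f (n - x) * (n : ℝ) ^ μ else 0 with hGdef
  -- shared bound
  have hsharebd : ∀ n x : ℕ, 2 * x ≤ n →
      f x * f (n - x) * (n : ℝ) ^ μ ≤ f x * (C * (2 : ℝ) ^ μ) := by
    intro n x hx
    have hnle : (n : ℝ) ≤ 2 * ((n - x : ℕ) : ℝ) := by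
      have : n ≤ 2 * (n - x) := by omega
      exact_mod_cast this
    have hrle : (n : ℝ) ^ μ ≤ (2 : ℝ) ^ μ * ((n - x : ℕ) : ℝ) ^ μ := by
      calc (n : ℝ) ^ μ ≤ (2 * ((n - x : ℕ) : ℝ)) ^ μ :=
            Real.rpow_le_rpow (Nat.cast_nonneg n) hnle (by linarith)
        _ = (2 : ℝ) ^ μ * ((n - x : ℕ) : ℝ) ^ μ :=
            Real.mul_rpow (by norm_num) (Nat.cast_nonneg _)
    have h3 : f (n - x) * (n : ℝ) ^ μ ≤ C * (2 : ℝ) ^ μ := by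
      calc f (n - x) * (n : ℝ) ^ μ
          ≤ f (n - x) * ((2 : ℝ) ^ μ * ((n - x : ℕ) : ℝ) ^ μ) :=
            mul_le_mul_of_nonneg_left hrle (hf0 _)
        _ = (f (n - x) * ((n - x : ℕ) : ℝ) ^ μ) * (2 : ℝ) ^ μ := by ring
        _ ≤ C * (2 : ℝ) ^ μ :=
            mul_le_mul_of_nonneg_right (hCb _) (Real.rpow_nonneg (by norm_num) μ)
    calc f x * f (n - x) * (n : ℝ) ^ μ = f x * (f (n - x) * (n : ℝ) ^ μ) := by ring
      _ ≤ f x * (C * (2 : ℝ) ^ μ) := mul_le_mul_of_nonneg_left h3 (hf0 x)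
  have hbdnonneg : ∀ x : ℕ, 0 ≤ f x * (C * (2 : ℝ) ^ μ) := fun x =>
    mul_nonneg (hf0 x) (mul_nonneg hC0 (Real.rpow_nonneg (by norm_num) μ))
  have habs : ∀ (n x : ℕ) (b' : ℝ), (b' = f x * f (n - x) * (n : ℝ) ^ μ ∨ b' = 0) →
      ‖b'‖ ≤ f x * (C * (2 : ℝ) ^ μ) → True := fun _ _ _ _ _ => trivial
  have hnormF : ∀ n x, ‖F n x‖ ≤ f x * (C * (2 : ℝ) ^ μ) := by
    intro n x
    simp only [hFdef]
    split_ifs with h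
    · rw [Real.norm_eq_abs, abs_of_nonneg
        (mul_nonneg (mul_nonneg (hf0 x) (hf0 _)) (Real.rpow_nonneg (Nat.cast_nonneg n) μ))]
      exact hsharebd n x h
    · simpa using hbdnonneg x
  have hnormG : ∀ n x, ‖G n x‖ ≤ f x * (C * (2 : ℝ) ^ μ) := by
    intro n x
    simp only [hGdef]
    split_ifs with h
    · rw [Real.norm_eq_abs, abs_of_nonneg
        (mul_nonneg (mul_nonneg (hf0 x) (hf0 _)) (Real.rpow_nonneg (Nat.cast_nonneg n) μ))]
      exact hsharebd n x h.le
    · simpa using hbdnonneg x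
  have hsumbd : Summable (fun x : ℕ => f x * (C * (2 : ℝ) ^ μ)) :=
    hsumf.mul_right _
  -- pointwise limits
  have hFlim : ∀ x : ℕ, Tendsto (fun n => F n x) atTop (nhds (f x * c)) := by
    intro x
    refine (tendsto_const_nhds.mul (hlim x)).congr' ?_
    filter_upwards [eventually_ge_atTop (2 * x)] with n hn
    simp only [hFdef, if_pos hn]; ring
  have hGlim : ∀ x : ℕ, Tendsto (fun n => G n x) atTop (nhds (f x * c)) := by
    intro x
    refine (tendsto_const_nhds.mul (hlim x)).congr' ?_
    filter_upwards [eventually_ge_atTop (2 * x + 1)] with n hn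
    simp only [hGdef, if_pos (by omega : 2 * x < n)]; ring
  have hFt : Tendsto (fun n => ∑' x, F n x) atTop (nhds (∑' x, f x * c)) :=
    tendsto_tsum_of_dominated_convergence hsumbd hFlim
      (Eventually.of_forall fun n => hnormF n)
  have hGt : Tendsto (fun n => ∑' x, G n x) atTop (nhds (∑' x, f x * c)) :=
    tendsto_tsum_of_dominated_convergence hsumbd hGlim
      (Eventually.of_forall fun n => hnormG n)
  -- identity for b n * n^μ * α^n
  have EqKey : ∀ n : ℕ, b n * (n : ℝ) ^ μ * α ^ n = (∑' x, F n x) + (∑' x, G n x) := by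
    intro n
    have tF : (∑' x, F n x) =
        ∑ x ∈ (Finset.range (n + 1)).filter (fun x => 2 * x ≤ n),
          f x * f (n - x) * (n : ℝ) ^ μ := by
      rw [tsum_eq_sum (s := Finset.range (n + 1)) (by
        intro x hx
        have : ¬ 2 * x ≤ n := by
          simp only [Finset.mem_range] at hx; omega
        simp only [hFdef, if_neg this])]
      rw [Finset.sum_filter]
    have tG : (∑' x, G n x) =
        ∑ x ∈ (Finset.range (n + 1)).filter (fun x => 2 * x < n),
          f x * f (n - x) * (n : ℝ) ^ μ := by
      rw [tsum_eq_sum (s := Finset.range (n + 1)) (by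
        intro x hx
        have : ¬ 2 * x < n := by
          simp only [Finset.mem_range] at hx; omega
        simp only [hGdef, if_neg this])]
      rw [Finset.sum_filter]
    have hsplit : ∑ x ∈ Finset.range (n + 1), f x * f (n - x) * (n : ℝ) ^ μ =
        (∑ x ∈ (Finset.range (n + 1)).filter (fun x => 2 * x ≤ n),
          f x * f (n - x) * (n : ℝ) ^ μ) +
        (∑ x ∈ (Finset.range (n + 1)).filter (fun x => ¬ 2 * x ≤ n),
          f x * f (n - x) * (n : ℝ) ^ μ) :=
      (Finset.sum_filter_add_sum_filter_not _ _ _).symm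
    have hreindex : ∑ x ∈ (Finset.range (n + 1)).filter (fun x => ¬ 2 * x ≤ n),
        f x * f (n - x) * (n : ℝ) ^ μ =
        ∑ x ∈ (Finset.range (n + 1)).filter (fun x => 2 * x < n),
          f x * f (n - x) * (n : ℝ) ^ μ := by
      refine Finset.sum_nbij' (fun x => n - x) (fun y => n - y) ?_ ?_ ?_ ?_ ?_
      · intro x hx
        simp only [Finset.mem_filter, Finset.mem_range] at hx ⊢
        omega
      · intro y hy
        simp only [Finset.mem_filter, Finset.mem_range] at hy ⊢
        omega
      · intro x hx
        simp only [Finset.mem_filter, Finset.mem_range] at hx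
        show n - (n - x) = x
        omega
      · intro y hy
        simp only [Finset.mem_filter, Finset.mem_range] at hy
        show n - (n - y) = y
        omega
      · intro x hx
        simp only [Finset.mem_filter, Finset.mem_range] at hx
        have hxx : n - (n - x) = x := by omega
        rw [hxx]
        ring
    have hLHS : b n * (n : ℝ) ^ μ * α ^ n =
        ∑ x ∈ Finset.range (n + 1), f x * f (n - x) * (n : ℝ) ^ μ := by
      rw [hb n, Finset.sum_mul, Finset.sum_mul]
      refine Finset.sum_congr rfl fun x hx => ?_
      simp only [Finset.mem_range] at hx
      have hxy : x + (n - x) = n := by omega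
      simp only [hfdef]
      rw [show α ^ n = α ^ x * α ^ (n - x) by rw [← pow_add, hxy]]
      ring
    rw [hLHS, hsplit, hreindex, tF, tG]
  -- finish
  have hfinal : Tendsto (fun n : ℕ => b n * (n : ℝ) ^ μ * α ^ n) atTop
      (nhds ((∑' x, f x * c) + (∑' x, f x * c))) :=
    (hFt.add hGt).congr fun n => (EqKey n).symm
  have hval : (∑' x, f x * c) + (∑' x, f x * c) = 2 * c * ∑' x : ℕ, f x := by
    rw [tsum_mul_right]; ring
  rwa [hval] at hfinal
end
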